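/- Let G be a graph with n ≥ 3 vertices and t > 1. Then no automorphism of μ_t(G) maps the root w to any vertex u_i^s with 0 ≤ s ≤ t−1 (i.e., any vertex below the top level). -/

import Mathlib

open SimpleGraph

/-- The generalized Mycielskian `μ_t(G)`: levels `0,…,t` of copies of `V(G)`
plus a root `none`. Level-0 vertices are the original vertices. -/
def genMyc {V : Type*} (G : SimpleGraph V) (t : ℕ) :
    SimpleGraph (Option (Fin (t + 1) × V)) :=
  SimpleGraph.fromRel fun a b =>
    match a, b with
    | some (s, i), some (s', j) =>
        ((s : ℕ) = 0 ∧ (s' : ℕ) = 0 ∧ G.Adj i j) ∨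
        ((s' : ℕ) = (s : ℕ) + 1 ∧ G.Adj i j)
    | some (s, _), none => (s : ℕ) = t
    | _, _ => False

/-- The (traditional) Mycielskian `μ(G)`. -/
def myc {V : Type*} (G : SimpleGraph V) : SimpleGraph (Option (Fin 2 × V)) :=
  genMyc G 1

/-- The star `K_{1,m}` with center `0` and `m` leaves. -/
def starG (m : ℕ) : SimpleGraph (Fin (m + 1)) :=
  SimpleGraph.fromRel fun a _ => a = 0

/-- A `d`-coloring is distinguishing if only the trivial automorphism preserves it. -/
def IsDistinguishing {V : Type*} (H : SimpleGraph V) (d : ℕ) (c : V → Fin d) : Prop :=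
  ∀ φ : H ≃g H, (∀ v, c (φ v) = c v) → ∀ v, φ v = v

/-- The distinguishing number of a graph. -/
noncomputable def distNum {V : Type*} (H : SimpleGraph V) : ℕ :=
  sInf {d | ∃ c : V → Fin d, IsDistinguishing H d c}

section Helpers

variable {V : Type*} {G : SimpleGraph V} {t : ℕ}

lemma gm_adj_some (a b : Fin (t+1)) (i j : V) :
    (genMyc G t).Adj (some (a,i)) (some (b,j)) ↔
      G.Adj i j ∧ ((a:ℕ) = 0 ∧ (b:ℕ) = 0 ∨ (b:ℕ) = (a:ℕ)+1 ∨ (a:ℕ) = (b:ℕ)+1) := by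
  simp only [genMyc, fromRel_adj]
  constructor
  · rintro ⟨hne, (⟨h1,h2,h3⟩|⟨h1,h2⟩)|(⟨h1,h2,h3⟩|⟨h1,h2⟩)⟩
    · exact ⟨h3, Or.inl ⟨h1,h2⟩⟩
    · exact ⟨h2, Or.inr (Or.inl h1)⟩
    · exact ⟨h3.symm, Or.inl ⟨h2,h1⟩⟩
    · exact ⟨h2.symm, Or.inr (Or.inr h1)⟩
  · rintro ⟨hadj, h⟩
    have hne : (some (a,i) : Option (Fin (t+1) × V)) ≠ some (b,j) := by
      intro hEq
      rw [Option.some_inj, Prod.mk.injEq] at hEq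
      exact G.ne_of_adj hadj hEq.2
    refine ⟨hne, ?_⟩
    rcases h with ⟨h1,h2⟩|h|h
    · exact Or.inl (Or.inl ⟨h1,h2,hadj⟩)
    · exact Or.inl (Or.inr ⟨h, hadj⟩)
    · exact Or.inr (Or.inr ⟨h, hadj.symm⟩)

lemma gm_adj_none (a : Fin (t+1)) (i : V) :
    (genMyc G t).Adj none (some (a,i)) ↔ (a:ℕ) = t := by
  simp only [genMyc, fromRel_adj]
  constructor
  · rintro ⟨hne, h|h⟩
    · exact h.elim
    · exact h
  · intro h
    exact ⟨by simp, Or.inr h⟩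

/-- The root-covering property: every neighbor `a` of the root has a vertex `b`,
non-adjacent to the root, whose neighborhood covers `N(a) \ {root}`. -/
lemma gm_root_prop (ht : 1 < t) :
    ∀ a, (genMyc G t).Adj none a →
      ∃ b, ¬ (genMyc G t).Adj none b ∧
        ∀ c, (genMyc G t).Adj a c → c ≠ none → (genMyc G t).Adj b c := by
  intro a ha
  rcases a with _ | ⟨st, j⟩
  · exact absurd ha (genMyc G t).irrefl
  · have hst : (st:ℕ) = t := (gm_adj_none st j).mp ha
    refine ⟨some (⟨t-2, by omega⟩, j), ?_, ?_⟩
    · rw [gm_adj_none]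
      simp only [Fin.val_mk]
      omega
    · intro c hc hcne
      rcases c with _ | ⟨r, l⟩
      · exact absurd rfl hcne
      · rw [gm_adj_some] at hc ⊢
        obtain ⟨hadj, hlev⟩ := hc
        have hr : (r:ℕ) < t+1 := r.isLt
        refine ⟨hadj, ?_⟩
        simp only [Fin.val_mk]
        omega

end Helpers

theorem stmt_7 {V : Type*} [Fintype V] (G : SimpleGraph V)
    (hn : 3 ≤ Fintype.card V) (t : ℕ) (ht : 1 < t) :
    ∀ φ : genMyc G t ≃g genMyc G t, ∀ (s : Fin (t + 1)) (i : V),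
      (s : ℕ) < t → φ none ≠ some (s, i) := by
  classical
  intro φ s i hs heq
  set sn := (s : ℕ) with hsn
  -- three distinct vertices of V
  obtain ⟨v1, v2, v3, h12, h13, h23⟩ : ∃ v1 v2 v3 : V, v1 ≠ v2 ∧ v1 ≠ v3 ∧ v2 ≠ v3 := by
    obtain ⟨u, hu, hcard⟩ := Finset.exists_subset_card_eq (s := (Finset.univ : Finset V)) (n := 3)
      (by simpa using hn)
    obtain ⟨a, b, c, hab, hac, hbc, rfl⟩ := Finset.card_eq_three.mp hcard
    exact ⟨a, b, c, hab, hac, hbc⟩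
  have tf : Fin (t+1) := ⟨t, by omega⟩
  -- characterization of images of neighbors of the root
  have himg : ∀ y : Option (Fin (t+1) × V), (genMyc G t).Adj none y →
      ∃ (r : Fin (t+1)) (k : V), φ y = some (r,k) ∧ G.Adj i k ∧
        (sn = 0 ∧ (r:ℕ) = 0 ∨ (r:ℕ) = sn+1 ∨ sn = (r:ℕ)+1) := by
    intro y hy
    have hadj : (genMyc G t).Adj (some (s,i)) (φ y) := by
      rw [← heq]
      exact φ.map_adj_iff.mpr hy
    rcases hEq : φ y with _ | ⟨r, k⟩
    · rw [hEq] at hadj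
      have := ((genMyc G t).adj_comm _ _).mp hadj
      rw [gm_adj_none] at this
      omega
    · rw [hEq, gm_adj_some] at hadj
      exact ⟨r, k, rfl, hadj.1, hadj.2⟩
  -- Step B : i has two distinct neighbors in G
  have hB : ∃ j k : V, G.Adj i j ∧ G.Adj i k ∧ j ≠ k := by
    by_contra hB
    push_neg at hB
    have hroot : ∀ v : V, (genMyc G t).Adj none (some (⟨t, by omega⟩, v)) := by
      intro v
      rw [gm_adj_none]
    obtain ⟨r1, k1, he1, ha1, hc1⟩ := himg _ (hroot v1)
    obtain ⟨r2, k2, he2, ha2, hc2⟩ := himg _ (hroot v2)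
    obtain ⟨r3, k3, he3, ha3, hc3⟩ := himg _ (hroot v3)
    have hk12 : k1 = k2 := hB _ _ ha1 ha2
    have hk13 : k1 = k3 := hB _ _ ha1 ha3
    have hrr : (r1:ℕ) = r2 ∨ (r1:ℕ) = r3 ∨ (r2:ℕ) = r3 := by omega
    have hinj : ∀ (va vb : V), va ≠ vb →
        φ (some (⟨t, by omega⟩, va)) ≠ φ (some (⟨t, by omega⟩, vb)) := by
      intro va vb hne h
      have := φ.injective h
      rw [Option.some_inj, Prod.mk.injEq] at this
      exact hne this.2
    rcases hrr with h | h | h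
    · exact hinj v1 v2 h12 (by rw [he1, he2, Fin.ext h, hk12])
    · exact hinj v1 v3 h13 (by rw [he1, he3, Fin.ext h, hk13])
    · exact hinj v2 v3 h23 (by rw [he2, he3, Fin.ext h, ← hk12, hk13])
  by_cases hcase : ∃ j, G.Adj i j ∧ ∃ l, G.Adj j l ∧ l ≠ i
  · -- Case (i): some neighbor j of i has a neighbor l ≠ i
    obtain ⟨j, hij, l, hjl, hli⟩ := hcase
    -- transported root-covering property
    have Px : ∀ a, (genMyc G t).Adj (some (s,i)) a →
        ∃ b, ¬ (genMyc G t).Adj (some (s,i)) b ∧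
          ∀ c, (genMyc G t).Adj a c → c ≠ some (s,i) → (genMyc G t).Adj b c := by
      intro a hxa
      have hsymm_x : φ.symm (some (s,i)) = none := by
        rw [← heq, RelIso.symm_apply_apply]
      have h0 : (genMyc G t).Adj none (φ.symm a) := by
        rw [← hsymm_x]
        exact φ.symm.map_adj_iff.mpr hxa
      obtain ⟨b0, hb0, hcov⟩ := gm_root_prop ht _ h0
      refine ⟨φ b0, ?_, ?_⟩
      · intro h
        apply hb0
        have h' := φ.symm.map_adj_iff.mpr h
        rwa [hsymm_x, RelIso.symm_apply_apply] at h'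
      · intro c hc hcx
        have h1 : (genMyc G t).Adj (φ.symm a) (φ.symm c) := φ.symm.map_adj_iff.mpr hc
        have h2 : φ.symm c ≠ none := by
          intro h
          apply hcx
          have : φ (φ.symm c) = φ none := by rw [h]
          rwa [RelIso.apply_symm_apply, heq] at this
        have h3 := hcov _ h1 h2
        have h4 := φ.map_adj_iff.mpr h3
        rwa [RelIso.apply_symm_apply] at h4
    rcases (by omega : sn + 1 < t ∨ sn + 1 = t) with hlt | heqt
    · -- s ≤ t-2
      have hxa : (genMyc G t).Adj (some (s,i)) (some (⟨sn+1, by omega⟩, j)) := by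
        rw [gm_adj_some]
        exact ⟨hij, by simp [hsn]⟩
      obtain ⟨b, hbx, hcov⟩ := Px _ hxa
      have hac1 : (genMyc G t).Adj (some (⟨sn+1, by omega⟩, j)) (some (⟨sn+2, by omega⟩, i)) := by
        rw [gm_adj_some]
        exact ⟨hij.symm, by simp⟩
      have hc1x : (some (⟨sn+2, by omega⟩, i) : Option (Fin (t+1) × V)) ≠ some (s, i) := by
        simp only [ne_eq, Option.some_inj, Prod.mk.injEq, Fin.ext_iff, Fin.val_mk]
        omega
      have hac2 : (genMyc G t).Adj (some (⟨sn+1, by omega⟩, j)) (some (s, l)) := by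
        rw [gm_adj_some]
        exact ⟨hjl, by simp [hsn]⟩
      have hc2x : (some (s, l) : Option (Fin (t+1) × V)) ≠ some (s, i) := by
        simp only [ne_eq, Option.some_inj, Prod.mk.injEq]
        tauto
      have hb1 := hcov _ hac1 hc1x
      have hb2 := hcov _ hac2 hc2x
      rcases b with _ | ⟨r, k⟩
      · rw [gm_adj_none] at hb2
        omega
      · rw [gm_adj_some] at hb1 hb2
        simp only [Fin.val_mk] at hb1 hb2
        apply hbx
        rw [gm_adj_some]
        exact ⟨hb1.1.symm, by omega⟩
    · -- s = t-1
      have hsn1 : 1 ≤ sn := by omega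
      have hxa : (genMyc G t).Adj (some (s,i)) (some (⟨sn-1, by omega⟩, j)) := by
        rw [gm_adj_some]
        refine ⟨hij, ?_⟩
        simp only [Fin.val_mk]
        omega
      obtain ⟨b, hbx, hcov⟩ := Px _ hxa
      have hac1 : (genMyc G t).Adj (some (⟨sn-1, by omega⟩, j)) (some (⟨sn-2, by omega⟩, i)) := by
        rw [gm_adj_some]
        refine ⟨hij.symm, ?_⟩
        simp only [Fin.val_mk]
        omega
      have hc1x : (some (⟨sn-2, by omega⟩, i) : Option (Fin (t+1) × V)) ≠ some (s, i) := by
        simp only [ne_eq, Option.some_inj, Prod.mk.injEq, Fin.ext_iff, Fin.val_mk]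
        omega
      have hac2 : (genMyc G t).Adj (some (⟨sn-1, by omega⟩, j)) (some (s, l)) := by
        rw [gm_adj_some]
        refine ⟨hjl, ?_⟩
        simp only [Fin.val_mk]
        omega
      have hc2x : (some (s, l) : Option (Fin (t+1) × V)) ≠ some (s, i) := by
        simp only [ne_eq, Option.some_inj, Prod.mk.injEq]
        tauto
      have hb1 := hcov _ hac1 hc1x
      have hb2 := hcov _ hac2 hc2x
      rcases b with _ | ⟨r, k⟩
      · rw [gm_adj_none] at hb2
        omega
      · rw [gm_adj_some] at hb1 hb2
        simp only [Fin.val_mk] at hb1 hb2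
        have hr : (r:ℕ) < t+1 := r.isLt
        apply hbx
        rw [gm_adj_some]
        exact ⟨hb1.1.symm, by omega⟩
  · -- Case (ii): every neighbor of i has neighborhood {i}
    push_neg at hcase
    obtain ⟨j1, j2, hij1, hij2, hj12⟩ := hB
    -- q = (t, i), its image c' = (ρ, k)
    have hrootq : (genMyc G t).Adj none (some (⟨t, by omega⟩, i)) := by
      rw [gm_adj_none]
    obtain ⟨ρ, k, heq', hik, _⟩ := himg _ hrootq
    have hk : ∀ l, G.Adj k l → l = i := hcase k hik
    -- three distinct neighbors of q
    have hq1 : (genMyc G t).Adj (some (⟨t, by omega⟩, i)) none := by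
      exact ((genMyc G t).adj_comm _ _).mp hrootq
    have hq2 : (genMyc G t).Adj (some (⟨t, by omega⟩, i)) (some (⟨t-1, by omega⟩, j1)) := by
      rw [gm_adj_some]
      refine ⟨hij1, ?_⟩
      simp only [Fin.val_mk]
      omega
    have hq3 : (genMyc G t).Adj (some (⟨t, by omega⟩, i)) (some (⟨t-1, by omega⟩, j2)) := by
      rw [gm_adj_some]
      refine ⟨hij2, ?_⟩
      simp only [Fin.val_mk]
      omega
    -- their images are neighbors of c'
    have himg2 : ∀ y : Option (Fin (t+1) × V),
        (genMyc G t).Adj (some (⟨t, by omega⟩, i)) y →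
        (φ y = none ∧ (ρ:ℕ) = t) ∨
        (∃ rr : Fin (t+1), φ y = some (rr, i) ∧
          ((ρ:ℕ) = 0 ∧ (rr:ℕ) = 0 ∨ (rr:ℕ) = (ρ:ℕ)+1 ∨ (ρ:ℕ) = (rr:ℕ)+1)) := by
      intro y hy
      have hadj : (genMyc G t).Adj (some (ρ, k)) (φ y) := by
        rw [← heq']
        exact φ.map_adj_iff.mpr hy
      rcases hEq : φ y with _ | ⟨rr, ll⟩
      · rw [hEq] at hadj
        have := ((genMyc G t).adj_comm _ _).mp hadj
        rw [gm_adj_none] at this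
        exact Or.inl ⟨rfl, this⟩
      · rw [hEq, gm_adj_some] at hadj
        have hlli : ll = i := hk ll hadj.1
        exact Or.inr ⟨rr, by rw [hlli], hadj.2⟩
    have hd1 := himg2 _ hq1
    have hd2 := himg2 _ hq2
    have hd3 := himg2 _ hq3
    -- distinctness of the three images
    have hne12 : φ (none : Option (Fin (t+1) × V)) ≠ φ (some (⟨t-1, by omega⟩, j1)) := by
      intro h
      exact Option.some_ne_none _ (φ.injective h).symm
    have hne13 : φ (none : Option (Fin (t+1) × V)) ≠ φ (some (⟨t-1, by omega⟩, j2)) := by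
      intro h
      exact Option.some_ne_none _ (φ.injective h).symm
    have hne23 : φ (some (⟨t-1, by omega⟩, j1)) ≠ φ (some (⟨t-1, by omega⟩, j2)) := by
      intro h
      have := φ.injective h
      rw [Option.some_inj, Prod.mk.injEq] at this
      exact hj12 this.2
    have hρlt : (ρ:ℕ) < t + 1 := ρ.isLt
    rcases hd1 with ⟨he1, hρ1⟩ | ⟨rr1, he1, hc1⟩ <;>
      rcases hd2 with ⟨he2, hρ2⟩ | ⟨rr2, he2, hc2⟩ <;>
        rcases hd3 with ⟨he3, hρ3⟩ | ⟨rr3, he3, hc3⟩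
    · exact hne12 (by rw [he1, he2])
    · -- 1 none, 3 none? no: here d1 none, d2 none
      exact hne12 (by rw [he1, he2])
    · exact hne13 (by rw [he1, he3])
    · -- d1 none (ρ = t), d2/d3 some: rr2 = rr3 forced
      have hr2 : (rr2:ℕ) < t+1 := rr2.isLt
      have hr3 : (rr3:ℕ) < t+1 := rr3.isLt
      have : (rr2:ℕ) = rr3 := by omega
      exact hne23 (by rw [he2, he3, Fin.ext this])
    · exact hne23 (by rw [he2, he3])
    · -- d2 none, d1/d3 some
      have hr1 : (rr1:ℕ) < t+1 := rr1.isLt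
      have hr3 : (rr3:ℕ) < t+1 := rr3.isLt
      have : (rr1:ℕ) = rr3 := by omega
      exact hne13 (by rw [he1, he3, Fin.ext this])
    · -- d3 none, d1/d2 some
      have hr1 : (rr1:ℕ) < t+1 := rr1.isLt
      have hr2 : (rr2:ℕ) < t+1 := rr2.isLt
      have : (rr1:ℕ) = rr2 := by omega
      exact hne12 (by rw [he1, he2, Fin.ext this])
    · -- all three some: three values in a 2-element set
      have hr1 : (rr1:ℕ) < t+1 := rr1.isLt
      have hr2 : (rr2:ℕ) < t+1 := rr2.isLt
      have hr3 : (rr3:ℕ) < t+1 := rr3.isLt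
      have : (rr1:ℕ) = rr2 ∨ (rr1:ℕ) = rr3 ∨ (rr2:ℕ) = rr3 := by omega
      rcases this with h | h | h
      · exact hne12 (by rw [he1, he2, Fin.ext h])
      · exact hne13 (by rw [he1, he3, Fin.ext h])
      · exact hne23 (by rw [he2, he3, Fin.ext h])
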